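/- Let ρ_E be a d×d complex density matrix, let ρ_AB be a d²×d² density matrix on ℂ^d ⊗ ℂ^d with reduced state ρ_B on the second factor, let p₀, p₁ ≥ 0 with p₀ + p₁ = 1 and p₀ ≤ p₁, and let η ∈ [0,1] satisfy γ := p₁(1−η) − p₀ ≥ 0. Then the matrix Ω_q := p₁η·ρ_AB + γ·(ρ_E ⊗ ρ_B) is positive semidefinite and its trace norm equals p₁ − p₀; consequently the minimum-error probability P_err = (1 − ‖Ω_q‖₁)/2 equals p₀, for every (pure or mixed) bipartite signal state ρ_AB. -/

import Mathlib

open Matrix BigOperators Kronecker ComplexOrder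

/-- The trace norm of a Hermitian matrix: the sum of the absolute values of its eigenvalues. -/
noncomputable def traceNorm {n : Type*} [Fintype n] [DecidableEq n]
    {A : Matrix n n ℂ} (hA : A.IsHermitian) : ℝ :=
  ∑ i, |hA.eigenvalues i|

lemma trace_eq_sum_eigs {n : Type*} [Fintype n] [DecidableEq n] {A : Matrix n n ℂ}
    (hA : A.IsHermitian) : A.trace = ∑ i, (hA.eigenvalues i : ℂ) := by
  exact hA.trace_eq_sum_eigenvalues

lemma kron_posSemidef {m n : Type*} [Fintype m] [Fintype n] [DecidableEq m] [DecidableEq n]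
    {A : Matrix m m ℂ} {B : Matrix n n ℂ} (hA : A.PosSemidef) (hB : B.PosSemidef) :
    (A ⊗ₖ B).PosSemidef := by
  exact hA.kronecker hB

/-- **Region I, quantum illumination.** If `p₀ ≤ p₁` and `γ := p₁(1-η) - p₀ ≥ 0`, then
`Ω_q = p₁η·ρ_AB + γ·(ρ_E ⊗ ρ_B)` is positive semidefinite, its trace norm equals `p₁ - p₀`,
and the minimum-error probability `(1 - ‖Ω_q‖₁)/2` equals `p₀`, for every (pure or mixed)
bipartite signal state `ρ_AB`, where `ρ_B` is the reduced state on the second factor. -/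
theorem region_I_quantum {d : ℕ}
    (ρE : Matrix (Fin d) (Fin d) ℂ) (hE : ρE.PosSemidef) (hEtr : ρE.trace = 1)
    (ρAB : Matrix (Fin d × Fin d) (Fin d × Fin d) ℂ)
    (hAB : ρAB.PosSemidef) (hABtr : ρAB.trace = 1)
    (ρB : Matrix (Fin d) (Fin d) ℂ)
    (hρB : ρB = Matrix.of fun k l => ∑ i, ρAB (i, k) (i, l))
    (p₀ p₁ η : ℝ) (hp₀ : 0 ≤ p₀) (hp₁ : 0 ≤ p₁) (hsum : p₀ + p₁ = 1)
    (hp : p₀ ≤ p₁) (hη₀ : 0 ≤ η) (hη₁ : η ≤ 1)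
    (hγ : 0 ≤ p₁ * (1 - η) - p₀)
    (hΩ : ((p₁ * η) • ρAB + (p₁ * (1 - η) - p₀) • (ρE ⊗ₖ ρB)).IsHermitian) :
    ((p₁ * η) • ρAB + (p₁ * (1 - η) - p₀) • (ρE ⊗ₖ ρB)).PosSemidef ∧
      traceNorm hΩ = p₁ - p₀ ∧
      (1 - traceNorm hΩ) / 2 = p₀ := by
  -- ρB is positive semidefinite
  have hBherm : ρB.IsHermitian := by
    ext k l
    simp only [hρB, Matrix.conjTranspose_apply, Matrix.of_apply, star_sum]
    exact Finset.sum_congr rfl fun i _ => hAB.isHermitian.apply (i, k) (i, l)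
  have hBpsd : ρB.PosSemidef := by
    refine Matrix.PosSemidef.of_dotProduct_mulVec_nonneg hBherm fun x => ?_
    have key : ∀ i : Fin d,
        star (fun p : Fin d × Fin d => if p.1 = i then x p.2 else 0) ⬝ᵥ
          ρAB *ᵥ (fun p : Fin d × Fin d => if p.1 = i then x p.2 else 0) =
        ∑ k, ∑ l, star (x k) * (ρAB (i, k) (i, l) * x l) := by
      intro i
      simp only [dotProduct, Matrix.mulVec, Pi.star_apply, Fintype.sum_prod_type,
        apply_ite star, star_zero, mul_ite, mul_zero, ite_mul, zero_mul,
        Finset.sum_ite_eq', Finset.mem_univ, if_true, Finset.mul_sum]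
      rw [Finset.sum_eq_single i]
      · rw [Finset.sum_comm]
        rw [Finset.sum_eq_single i]
        · simp
        · intro b _ hb; simp [hb]
        · simp
      · intro b _ hb; simp [hb]
      · simp
    have expand : star x ⬝ᵥ ρB *ᵥ x =
        ∑ i : Fin d, ∑ k, ∑ l, star (x k) * (ρAB (i, k) (i, l) * x l) := by
      symm
      rw [Finset.sum_comm]
      refine Finset.sum_congr rfl fun k _ => ?_
      rw [Finset.sum_comm]
      simp only [hρB, dotProduct, Matrix.mulVec, Matrix.of_apply, Pi.star_apply,
        Finset.mul_sum, Finset.sum_mul]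
    rw [expand]
    refine Finset.sum_nonneg fun i _ => ?_
    rw [← key i]
    exact hAB.dotProduct_mulVec_nonneg _
  have hKpsd : (ρE ⊗ₖ ρB).PosSemidef := kron_posSemidef hE hBpsd
  have hc1 : (0:ℂ) ≤ ((p₁ * η : ℝ) : ℂ) := by
    rw [Complex.zero_le_real]; positivity
  have hc2 : (0:ℂ) ≤ ((p₁ * (1 - η) - p₀ : ℝ) : ℂ) := by
    rw [Complex.zero_le_real]; exact hγ
  have hΩpsd : ((p₁ * η) • ρAB + (p₁ * (1 - η) - p₀) • (ρE ⊗ₖ ρB)).PosSemidef := by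
    refine Matrix.PosSemidef.of_dotProduct_mulVec_nonneg hΩ fun x => ?_
    rw [Matrix.add_mulVec, dotProduct_add, Matrix.smul_mulVec,
      Matrix.smul_mulVec, dotProduct_smul, dotProduct_smul,
      Complex.real_smul, Complex.real_smul]
    exact add_nonneg (mul_nonneg hc1 (hAB.dotProduct_mulVec_nonneg x)) (mul_nonneg hc2 (hKpsd.dotProduct_mulVec_nonneg x))
  have htrB : ρB.trace = 1 := by
    rw [hρB, ← hABtr]
    simp only [Matrix.trace, Matrix.diag, Matrix.of_apply, Fintype.sum_prod_type]
    rw [Finset.sum_comm]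
  have htrK : (ρE ⊗ₖ ρB).trace = 1 := by
    rw [Matrix.trace_kronecker, hEtr, htrB, one_mul]
  have htrΩ : ((p₁ * η) • ρAB + (p₁ * (1 - η) - p₀) • (ρE ⊗ₖ ρB)).trace
      = ((p₁ - p₀ : ℝ) : ℂ) := by
    rw [Matrix.trace_add, Matrix.trace_smul, Matrix.trace_smul, hABtr, htrK]
    simp only [Complex.real_smul, mul_one]
    push_cast
    ring
  have hsumeigR : ∑ i, hΩ.eigenvalues i = p₁ - p₀ := by
    have : ∑ i, (hΩ.eigenvalues i : ℂ) = ((p₁ - p₀ : ℝ) : ℂ) := by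
      rw [← trace_eq_sum_eigs hΩ, htrΩ]
    exact_mod_cast this
  have hTN : traceNorm hΩ = p₁ - p₀ := by
    rw [traceNorm, ← hsumeigR]
    exact Finset.sum_congr rfl fun i _ => abs_of_nonneg (hΩpsd.eigenvalues_nonneg i)
  exact ⟨hΩpsd, hTN, by rw [hTN]; linarith⟩
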